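/- Let B be a trimmed weighted automaton over the max-plus semiring (ℕ ∪ {−∞}, max, +) whose semantics is the function f(w) = Σᵢ max(|wᵢ|_a, |wᵢ|_b) for w = w₀ c w₁ c ⋯ c wₙ with wᵢ ∈ {a,b}*. Then every self-loop transition δ = (q, v, q) with v ∈ {a,b,c} has weight wgt(δ) ∈ {0,1}. -/

import Mathlib

variable {Q Q' A R : Type*}

/-- `RunFrom Δ p w ρ`: `ρ` is the list of states visited after `p` along a run
reading `w` that starts in `p`. -/
def RunFrom (Δ : Q → A → Q → Prop) : Q → List A → List Q → Prop
  | _, [], [] => True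
  | p, a :: w, q :: ρ => Δ p a q ∧ RunFrom Δ q w ρ
  | _, _, _ => False

/-- There is a run from `p` to `q` reading `w`. -/
def HasRun (Δ : Q → A → Q → Prop) (p : Q) (w : List A) (q : Q) : Prop :=
  ∃ ρ, RunFrom Δ p w ρ ∧ (p :: ρ).getLast (List.cons_ne_nil _ _) = q

/-- `m`-fold power of a word. -/
def wpow (u : List A) (m : ℕ) : List A := (List.replicate m u).flatten

/-- Aperiodicity of a nondeterministic automaton. -/
def Aperiodic (Δ : Q → A → Q → Prop) : Prop :=
  ∃ m, 1 ≤ m ∧ ∀ (p q : Q) (u : List A), u ≠ [] →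
    (HasRun Δ p (wpow u m) q ↔ HasRun Δ p (wpow u (m + 1)) q)

/-- `p` and `q` are in the same strongly connected component. -/
def SameSCC (Δ : Q → A → Q → Prop) (p q : Q) : Prop :=
  p = q ∨ ((∃ u : List A, u ≠ [] ∧ HasRun Δ p u q) ∧ (∃ v : List A, v ≠ [] ∧ HasRun Δ q v p))

/-- The automaton is unambiguous from `p` to `q`. -/
def UnambFromTo (Δ : Q → A → Q → Prop) (p q : Q) : Prop :=
  ∀ (u : List A) (ρ₁ ρ₂ : List Q), u ≠ [] →
    RunFrom Δ p u ρ₁ → RunFrom Δ p u ρ₂ →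
    (p :: ρ₁).getLast (List.cons_ne_nil _ _) = q →
    (p :: ρ₂).getLast (List.cons_ne_nil _ _) = q → ρ₁ = ρ₂

def SCCUnambiguous (Δ : Q → A → Q → Prop) : Prop :=
  ∀ p q : Q, SameSCC Δ p q → UnambFromTo Δ p q

/-- The set of accepting runs on `w`, represented as pairs of an initial state and
the list of subsequently visited states. -/
def AccRuns (Δ : Q → A → Q → Prop) (I F : Set Q) (w : List A) : Set (Q × List Q) :=
  {x | x.1 ∈ I ∧ RunFrom Δ x.1 w x.2 ∧ (x.1 :: x.2).getLast (List.cons_ne_nil _ _) ∈ F}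

/-- The sequence of weights along a run. -/
def wgtSeq (wgt : Q → A → Q → R) : Q → List A → List Q → List R
  | p, a :: w, q :: ρ => wgt p a q :: wgtSeq wgt q w ρ
  | _, _, _ => []


/-- The three-letter alphabet `{a, b, c}`. -/
inductive ABC
  | a | b | c
deriving DecidableEq

/-- `fmax w = Σᵢ max(|wᵢ|_a, |wᵢ|_b)` where `w = w₀ c w₁ c ⋯ c wₙ` with
`wᵢ ∈ {a,b}*`. -/
def fmax (w : List ABC) : ℕ :=
  ((w.splitOn ABC.c).map fun v => max (v.count ABC.a) (v.count ABC.b)).sum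

lemma fmax_le_length (w : List ABC) : fmax w ≤ w.length := by
  induction w with
  | nil => simp [fmax]
  | cons x w ih =>
    unfold fmax List.splitOn at ih ⊢
    rw [List.splitOnP_cons]
    by_cases hx : x = ABC.c
    · simp [hx]; omega
    · have hne := List.splitOnP_ne_nil (fun x => x == ABC.c) w
      obtain ⟨h, t, ht⟩ := List.exists_cons_of_ne_nil hne
      rw [ht] at ih ⊢
      simp only [beq_iff_eq, hx, if_false, List.modifyHead_cons, List.map_cons,
        List.sum_cons, List.length_cons] at ih ⊢
      have h1 : (x :: h).count ABC.a ≤ h.count ABC.a + 1 := by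
        rw [List.count_cons]; split <;> omega
      have h2 : (x :: h).count ABC.b ≤ h.count ABC.b + 1 := by
        rw [List.count_cons]; split <;> omega
      have h3 : max ((x :: h).count ABC.a) ((x :: h).count ABC.b)
          ≤ max (h.count ABC.a) (h.count ABC.b) + 1 := by
        simp only [max_le_iff]; omega
      omega

lemma getLast_cons_append (p : Q) (ρ₁ ρ₂ : List Q) :
    (p :: (ρ₁ ++ ρ₂)).getLast (List.cons_ne_nil _ _) =
      (((p :: ρ₁).getLast (List.cons_ne_nil _ _)) :: ρ₂).getLast (List.cons_ne_nil _ _) := by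
  cases ρ₂ with
  | nil => simp
  | cons y ys =>
    have h1 := List.getLast_append_right (l := p :: ρ₁) (l' := y :: ys) (List.cons_ne_nil _ _)
    rw [List.getLast_cons (List.cons_ne_nil _ _)]
    exact h1

lemma runFrom_append {Δ : Q → A → Q → Prop} :
    ∀ (p : Q) (u : List A) (ρ₁ : List Q) {w ρ₂}, RunFrom Δ p u ρ₁ →
      RunFrom Δ ((p :: ρ₁).getLast (List.cons_ne_nil _ _)) w ρ₂ →
      RunFrom Δ p (u ++ w) (ρ₁ ++ ρ₂)
  | p, [], [], w, ρ₂, _, h2 => by simpa using h2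
  | p, a :: u, q :: ρ₁, w, ρ₂, h1, h2 => by
    refine ⟨h1.1, runFrom_append q u ρ₁ h1.2 ?_⟩
    rwa [List.getLast_cons (List.cons_ne_nil _ _)] at h2
  | p, [], _ :: _, w, ρ₂, h1, _ => h1.elim
  | p, _ :: _, [], w, ρ₂, h1, _ => h1.elim

lemma wgtSeq_append {wgt : Q → A → Q → R} :
    ∀ (p : Q) (u : List A) (ρ₁ : List Q) (w : List A) (ρ₂ : List Q), ρ₁.length = u.length →
      wgtSeq wgt p (u ++ w) (ρ₁ ++ ρ₂) =
        wgtSeq wgt p u ρ₁ ++ wgtSeq wgt ((p :: ρ₁).getLast (List.cons_ne_nil _ _)) w ρ₂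
  | p, [], [], w, ρ₂, _ => by simp [wgtSeq]
  | p, a :: u, q :: ρ₁, w, ρ₂, h => by
    simp only [List.cons_append, wgtSeq, List.getLast_cons (List.cons_ne_nil q ρ₁),
      List.append_eq]
    rw [wgtSeq_append q u ρ₁ w ρ₂ (by simpa using h)]
  | p, [], _ :: _, _, _, h => by simp at h
  | p, _ :: _, [], _, _, h => by simp at h

lemma runFrom_length {Δ : Q → A → Q → Prop} :
    ∀ {p : Q} {u : List A} {ρ : List Q}, RunFrom Δ p u ρ → ρ.length = u.length
  | _, [], [], _ => rfl
  | _, _ :: u, _ :: ρ, h => by simpa using runFrom_length (Δ := Δ) h.2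
  | _, [], _ :: _, h => h.elim
  | _, _ :: _, [], h => h.elim

lemma run_split {Δ : Q → A → Q → Prop} :
    ∀ {p : Q} {w : List A} {ρ : List Q} {q : Q}, RunFrom Δ p w ρ → q ∈ p :: ρ →
      ∃ u w' ρ₁ ρ₂, w = u ++ w' ∧ ρ = ρ₁ ++ ρ₂ ∧ RunFrom Δ p u ρ₁ ∧
        (p :: ρ₁).getLast (List.cons_ne_nil _ _) = q ∧ RunFrom Δ q w' ρ₂ := by
  intro p w ρ
  induction ρ generalizing p w with
  | nil =>
    intro q hrun hmem
    cases w with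
    | nil =>
      refine ⟨[], [], [], [], rfl, rfl, trivial, ?_, ?_⟩ <;> simp_all
    | cons a w => exact hrun.elim
  | cons q' ρ' ih =>
    intro q hrun hmem
    cases w with
    | nil => exact hrun.elim
    | cons a w =>
      rcases List.mem_cons.1 hmem with h | h
      · exact ⟨[], a :: w, [], q' :: ρ', rfl, rfl, trivial, h.symm, h ▸ hrun⟩
      · obtain ⟨u, w', ρ₁, ρ₂, h1, h2, h3, h4, h5⟩ := ih hrun.2 h
        exact ⟨a :: u, w', q' :: ρ₁, ρ₂, by simp [h1], by simp [h2],
          ⟨hrun.1, h3⟩, by rwa [List.getLast_cons (List.cons_ne_nil _ _)], h5⟩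

lemma runFrom_loop {Δ : Q → A → Q → Prop} {q : Q} {v : A} (h : Δ q v q) :
    ∀ ℓ : ℕ, RunFrom Δ q (List.replicate ℓ v) (List.replicate ℓ q)
  | 0 => trivial
  | ℓ + 1 => ⟨h, runFrom_loop h ℓ⟩

lemma wgtSeq_loop (wgt : Q → A → Q → R) (q : Q) (v : A) :
    ∀ ℓ : ℕ, wgtSeq wgt q (List.replicate ℓ v) (List.replicate ℓ q)
      = List.replicate ℓ (wgt q v q)
  | 0 => rfl
  | ℓ + 1 => by simp [List.replicate_succ, wgtSeq, wgtSeq_loop wgt q v ℓ]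

lemma getLast_replicate (q : Q) (ℓ : ℕ) :
    (q :: List.replicate ℓ q).getLast (List.cons_ne_nil _ _) = q := by
  induction ℓ with
  | zero => rfl
  | succ n ih =>
    rw [List.replicate_succ, List.getLast_cons (List.cons_ne_nil _ _)]
    exact ih


/-- In a trimmed weighted automaton over the max-plus semiring whose semantics is
`fmax`, every self-loop transition has weight `0` or `1`. -/
theorem selfLoop_weight_le_one [Fintype Q] (Δ : Q → ABC → Q → Prop)
    (wgt : Q → ABC → Q → ℕ) (I F : Set Q)
    (htrim : ∀ q : Q, ∃ (w : List ABC) (x : Q × List Q),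
      x ∈ AccRuns Δ I F w ∧ q ∈ x.1 :: x.2)
    (hsem : ∀ w : List ABC, w ≠ [] →
      IsGreatest {v : ℕ | ∃ x ∈ AccRuns Δ I F w, (wgtSeq wgt x.1 w x.2).sum = v}
        (fmax w)) :
    ∀ (q : Q) (v : ABC), Δ q v q → wgt q v q = 0 ∨ wgt q v q = 1 := by
  intro q v hloop
  set α := wgt q v q with hα
  -- suffices α ≤ 1
  suffices hle : α ≤ 1 by omega
  by_contra hgt
  push_neg at hgt
  obtain ⟨w, ⟨p, ρ⟩, ⟨hI, hrun, hF⟩, hmem⟩ := htrim q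
  dsimp only at hI hrun hF hmem
  obtain ⟨u, w', ρ₁, ρ₂, hw, hρ, hr1, hlast, hr2⟩ := run_split hrun hmem
  set ℓ := u.length + w'.length + 1 with hℓ
  set W := u ++ (List.replicate ℓ v ++ w') with hW
  set P := ρ₁ ++ (List.replicate ℓ q ++ ρ₂) with hP
  have hWne : W ≠ [] := by
    simp [hW, hℓ, List.replicate_succ]
  -- the pumped run
  have hrun2 : RunFrom Δ p W P := by
    refine runFrom_append p u ρ₁ hr1 ?_
    rw [hlast]
    refine runFrom_append q _ _ (runFrom_loop hloop ℓ) ?_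
    rwa [getLast_replicate]
  -- final state
  have hfin : (p :: P).getLast (List.cons_ne_nil _ _)
      = (p :: ρ).getLast (List.cons_ne_nil _ _) := by
    rw [hP, getLast_cons_append, hlast, getLast_cons_append, getLast_replicate,
      hρ, getLast_cons_append, hlast]
  have hacc : (p, P) ∈ AccRuns Δ I F W := ⟨hI, hrun2, by rw [hfin]; exact hF⟩
  -- weight of the pumped run
  have hlen1 : ρ₁.length = u.length := runFrom_length hr1
  have hsum : (wgtSeq wgt p W P).sum
      = (wgtSeq wgt p u ρ₁).sum + (ℓ * α + (wgtSeq wgt q w' ρ₂).sum) := by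
    rw [hW, hP, wgtSeq_append p u ρ₁ _ _ hlen1, hlast,
      wgtSeq_append q _ _ _ _ (by simp), getLast_replicate, wgtSeq_loop]
    simp [mul_comm, hα]
  -- compare with fmax
  have hub := (hsem W hWne).2 ⟨(p, P), hacc, rfl⟩
  dsimp only at hub
  have hfb := fmax_le_length W
  have hWlen : W.length = u.length + (ℓ + w'.length) := by simp [hW]
  have : ℓ * α ≤ u.length + (ℓ + w'.length) := by omega
  have h2ℓ : 2 * ℓ ≤ ℓ * α := Nat.mul_le_mul_right ℓ hgt |>.trans (by rw [Nat.mul_comm])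
  omega
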